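/- In an acyclic simple graph, let M be a nonempty path-closed set of vertices and u a vertex connected to some vertex of M. If m ∈ M is a vertex of M at minimal graph distance from u, then for every vertex m' ∈ M connected to u, the unique path from u to m' passes through m (the 'gate' property of path-closed subsets of trees). -/
import Mathlib


/-- A set of vertices is path-closed ("nice") if for any two of its vertices,
every vertex on any path between them belongs to the set. -/
def PathClosed {V : Type*} (G : SimpleGraph V) (S : Set V) : Prop :=
  ∀ a b : V, a ∈ S → b ∈ S → ∀ p : G.Path a b, ∀ x ∈ p.val.support, x ∈ S

/-- Gate property: in an acyclic simple graph, let `M` be a nonempty path-closed set of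
vertices and `u` a vertex connected to some vertex of `M`. If `m ∈ M` realizes the
minimal distance from `u` to `M`, then every path from `u` to any vertex `m' ∈ M`
passes through `m`. -/
theorem gate_property {V : Type*} (G : SimpleGraph V) (hG : G.IsAcyclic)
    (M : Set V) (hM : PathClosed G M) (hne : M.Nonempty)
    (u m : V) (hm : m ∈ M) (hreach : G.Reachable u m)
    (hmin : ∀ m'' ∈ M, G.Reachable u m'' → G.dist u m ≤ G.dist u m'') :
    ∀ m' ∈ M, ∀ p : G.Path u m', m ∈ p.val.support := by
  classical
  intro m' hm' p
  by_cases hum : u = m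
  · subst hum; exact p.val.start_mem_support
  -- the unique path from u to m
  obtain ⟨w0⟩ := hreach
  set wP : G.Path u m := w0.toPath with hwP
  -- wP has length equal to dist u m
  have hdistle : G.dist u m ≤ wP.val.length := SimpleGraph.dist_le _
  have hlen : wP.val.length = G.dist u m := by
    obtain ⟨w1, hw1⟩ := SimpleGraph.Reachable.exists_walk_length_eq_edist ⟨w0⟩
    have : wP = w1.toPath := hG.path_unique _ _
    have hle : wP.val.length ≤ w1.length := by
      rw [this]
      exact SimpleGraph.Walk.length_bypass_le _
    have hw1d : w1.length = G.dist u m := by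
      have := congrArg ENat.toNat hw1
      simpa [SimpleGraph.dist] using this
    omega
  -- the path from m to m', whose support lies in M
  have hreach' : G.Reachable m m' := ⟨w0.reverse.append p.val⟩
  obtain ⟨s0⟩ := hreach'
  set s : G.Path m m' := s0.toPath with hs
  have hsM : ∀ x ∈ s.val.support, x ∈ M := hM m m' hm hm' s
  -- Claim A: every vertex of wP other than m is not in M
  have claimA : ∀ x ∈ wP.val.support, x ≠ m → x ∉ M := by
    intro x hx hxm hxM
    have h1 : G.dist u x ≤ (wP.val.takeUntil x hx).length :=
      SimpleGraph.dist_le _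
    have h2 : (wP.val.takeUntil x hx).length + (wP.val.dropUntil x hx).length
        = wP.val.length := by
      conv_rhs => rw [← wP.val.take_spec hx]
      rw [SimpleGraph.Walk.length_append]
    have h3 : (wP.val.dropUntil x hx).length ≠ 0 := by
      intro h0
      exact hxm (SimpleGraph.Walk.eq_of_length_eq_zero h0)
    have h4 : G.dist u m ≤ G.dist u x :=
      hmin x hxM ⟨wP.val.takeUntil x hx⟩
    omega
  -- Claim B: wP's support is contained in p's support union s's support
  have claimB : ∀ x ∈ wP.val.support, x ∈ p.val.support ∨ x ∈ s.val.support := by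
    intro x hx
    have huniq : wP = (p.val.append s.val.reverse).toPath := hG.path_unique _ _
    rw [huniq] at hx
    have := SimpleGraph.Walk.support_toPath_subset _ hx
    rw [SimpleGraph.Walk.mem_support_append_iff] at this
    rcases this with h | h
    · exact Or.inl h
    · exact Or.inr (by simpa using h)
  -- main argument
  by_contra hmp
  -- wP is nonnil; get its last edge: reverse is cons
  have hrev : wP.val.reverse.length ≠ 0 := by
    rw [SimpleGraph.Walk.length_reverse]
    intro h0
    exact hum (SimpleGraph.Walk.eq_of_length_eq_zero h0)
  obtain ⟨y, r, hadj, hr⟩ : ∃ (y : V) (r : G.Walk y u) (hadj : G.Adj m y),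
      wP.val.reverse = SimpleGraph.Walk.cons hadj r := by
    cases hrw : wP.val.reverse with
    | nil => rw [hrw] at hrev; simp at hrev
    | cons hadj r => exact ⟨_, r, hadj, rfl⟩
  have hy : y ∈ wP.val.support := by
    have : y ∈ wP.val.reverse.support := by rw [hr]; simp
    simpa using this
  have hym : y ≠ m := hadj.ne'
  have hyM : y ∉ M := claimA y hy hym
  have hyp : y ∈ p.val.support := by
    rcases claimB y hy with h | h
    · exact h
    · exact absurd (hsM y h) hyM
  -- split p at y and build a path from m to m'
  have hp2 : (p.val.dropUntil y hyp).IsPath := p.prop.dropUntil hyp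
  have hmp2 : m ∉ (p.val.dropUntil y hyp).support := fun h =>
    hmp (SimpleGraph.Walk.support_dropUntil_subset _ hyp h)
  have ht : (SimpleGraph.Walk.cons hadj (p.val.dropUntil y hyp)).IsPath :=
    hp2.cons hmp2
  have huniq2 : s = ⟨SimpleGraph.Walk.cons hadj (p.val.dropUntil y hyp), ht⟩ :=
    hG.path_unique _ _
  have : y ∈ s.val.support := by rw [huniq2]; simp
  exact hyM (hsM y this)
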